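/- For every integer k ≥ 1, ∑_{j=1}^{k-1} ∑_{i=1}^{j} C(k+i,j) + 2^{k+1} = 1 + C(2k+1,k). -/

import Mathlib

private lemma sum_shift' (k a b : ℕ) (f : ℕ → ℕ) :
    ∑ m ∈ Finset.Icc (k + a) (k + b), f m = ∑ i ∈ Finset.Icc a b, f (k + i) := by
  rw [← Finset.map_add_left_Icc, Finset.sum_map]
  rfl

private lemma inner_sum' (k j : ℕ) (hj : j ≤ k) :
    (∑ i ∈ Finset.Icc 1 j, Nat.choose (k + i) j) + Nat.choose (k + 1) (j + 1)
      = Nat.choose (k + j + 1) (j + 1) := by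
  have h1 : ∑ m ∈ Finset.Icc j (k + j), Nat.choose m j = Nat.choose (k + j + 1) (j + 1) :=
    Nat.sum_Icc_choose _ _
  have h2 : ∑ m ∈ Finset.Icc j k, Nat.choose m j = Nat.choose (k + 1) (j + 1) :=
    Nat.sum_Icc_choose _ _
  have hsplit : (∑ m ∈ Finset.Ico j (k + 1), Nat.choose m j)
      + ∑ m ∈ Finset.Ico (k + 1) (k + j + 1), Nat.choose m j
      = ∑ m ∈ Finset.Ico j (k + j + 1), Nat.choose m j :=
    Finset.sum_Ico_consecutive _ (by omega) (by omega)
  rw [Finset.Ico_add_one_right_eq_Icc, Finset.Ico_add_one_right_eq_Icc, Finset.Ico_add_one_right_eq_Icc] at hsplit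
  have h3 : ∑ m ∈ Finset.Icc (k + 1) (k + j), Nat.choose m j
      = ∑ i ∈ Finset.Icc 1 j, Nat.choose (k + i) j := sum_shift' k 1 j _
  omega

/-- For every integer `k ≥ 1`,
`∑_{j=1}^{k-1} ∑_{i=1}^{j} C(k+i, j) + 2^{k+1} = 1 + C(2k+1, k)`. -/
theorem sum_binomial_identity (k : ℕ) (hk : 1 ≤ k) :
    (∑ j ∈ Finset.Icc 1 (k - 1), ∑ i ∈ Finset.Icc 1 j, Nat.choose (k + i) j) + 2 ^ (k + 1)
    = 1 + Nat.choose (2 * k + 1) k := by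
  -- S + B = A
  have key : (∑ j ∈ Finset.Icc 1 (k - 1), ∑ i ∈ Finset.Icc 1 j, Nat.choose (k + i) j)
      + (∑ j ∈ Finset.Icc 1 (k - 1), Nat.choose (k + 1) (j + 1))
      = ∑ j ∈ Finset.Icc 1 (k - 1), Nat.choose (k + j + 1) (j + 1) := by
    rw [← Finset.sum_add_distrib]
    refine Finset.sum_congr rfl fun j hj => ?_
    have h := Finset.mem_Icc.mp hj
    exact inner_sum' k j (by omega)
  -- A rewritten by symmetry
  have hA : ∑ j ∈ Finset.Icc 1 (k - 1), Nat.choose (k + j + 1) (j + 1)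
      = ∑ j ∈ Finset.Icc 1 (k - 1), Nat.choose (k + j + 1) k := by
    refine Finset.sum_congr rfl fun j hj => ?_
    have h := Nat.choose_symm (n := k + j + 1) (k := j + 1) (by omega)
    rw [show k + j + 1 - (j + 1) = k by omega] at h
    exact h.symm
  -- A + (k+2) = C(2k+1, k+1)
  have hA2 : (∑ j ∈ Finset.Icc 1 (k - 1), Nat.choose (k + j + 1) k) + (k + 2)
      = Nat.choose (2 * k + 1) (k + 1) := by
    have h1 : ∑ m ∈ Finset.Icc k (2 * k), Nat.choose m k
        = Nat.choose (2 * k + 1) (k + 1) := Nat.sum_Icc_choose _ _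
    have hsplit : (∑ m ∈ Finset.Ico k (k + 2), Nat.choose m k)
        + ∑ m ∈ Finset.Ico (k + 2) (2 * k + 1), Nat.choose m k
        = ∑ m ∈ Finset.Ico k (2 * k + 1), Nat.choose m k :=
      Finset.sum_Ico_consecutive _ (by omega) (by omega)
    rw [Finset.Ico_add_one_right_eq_Icc, Finset.Ico_add_one_right_eq_Icc, (show Finset.Ico k (k + 2) = Finset.Icc k (k + 1) from Finset.Ico_add_one_right_eq_Icc (a := k) (b := k + 1))] at hsplit
    have hlow : ∑ m ∈ Finset.Icc k (k + 1), Nat.choose m k = k + 2 := by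
      rw [Finset.sum_Icc_succ_top (by omega), Finset.Icc_self, Finset.sum_singleton]
      simp [Nat.choose_succ_self_right]
      omega
    have hshift : ∑ m ∈ Finset.Icc (k + 2) (2 * k), Nat.choose m k
        = ∑ j ∈ Finset.Icc 1 (k - 1), Nat.choose (k + j + 1) k := by
      have hset : Finset.Icc (k + 2) (2 * k) = Finset.Icc (k + 1 + 1) (k + 1 + (k - 1)) := by
        congr 1 <;> omega
      rw [hset, sum_shift' (k + 1) 1 (k - 1) (fun m => Nat.choose m k)]
      exact Finset.sum_congr rfl fun j _ => by rw [show k + 1 + j = k + j + 1 by omega]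
    omega
  -- B + (k+3) = 2^(k+1)
  have hB : (∑ j ∈ Finset.Icc 1 (k - 1), Nat.choose (k + 1) (j + 1)) + (k + 3)
      = 2 ^ (k + 1) := by
    have h1 : ∑ t ∈ Finset.range (k + 2), Nat.choose (k + 1) t = 2 ^ (k + 1) :=
      Nat.sum_range_choose (k + 1)
    rw [Finset.range_eq_Ico] at h1
    have hsplit : (∑ t ∈ Finset.Ico 0 2, Nat.choose (k + 1) t)
        + ∑ t ∈ Finset.Ico 2 (k + 2), Nat.choose (k + 1) t
        = ∑ t ∈ Finset.Ico 0 (k + 2), Nat.choose (k + 1) t :=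
      Finset.sum_Ico_consecutive _ (by omega) (by omega)
    have hlow : ∑ t ∈ Finset.Ico 0 2, Nat.choose (k + 1) t = k + 2 := by
      rw [show (2 : ℕ) = 1 + 1 from rfl, Finset.sum_Ico_succ_top (by omega),
        Finset.sum_Ico_succ_top (by omega), Finset.Ico_self, Finset.sum_empty]
      simp
      omega
    have htop : ∑ t ∈ Finset.Ico 2 (k + 2), Nat.choose (k + 1) t
        = (∑ t ∈ Finset.Ico 2 (k + 1), Nat.choose (k + 1) t) + 1 := by
      rw [show k + 2 = (k + 1) + 1 from rfl, Finset.sum_Ico_succ_top (by omega)]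
      simp
    have hshift : ∑ t ∈ Finset.Ico 2 (k + 1), Nat.choose (k + 1) t
        = ∑ j ∈ Finset.Icc 1 (k - 1), Nat.choose (k + 1) (j + 1) := by
      have hset : Finset.Ico 2 (k + 1) = Finset.Icc (1 + 1) (1 + (k - 1)) := by
        rw [Finset.Ico_add_one_right_eq_Icc]; congr 1 <;> omega
      rw [hset, sum_shift' 1 1 (k - 1) (fun t => Nat.choose (k + 1) t)]
      exact Finset.sum_congr rfl fun j _ => by rw [Nat.add_comm 1 j]
    omega
  have hsymm : Nat.choose (2 * k + 1) (k + 1) = Nat.choose (2 * k + 1) k := by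
    have h := Nat.choose_symm (n := 2 * k + 1) (k := k + 1) (by omega)
    rw [show 2 * k + 1 - (k + 1) = k by omega] at h
    exact h.symm
  omega
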